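/- arXiv:2507.05021 — 4 statements merged into one kernel-verified Lean document; each statement's English description precedes it below -/
import Mathlib

section
/- The element v₄ := j⊗j − c₁^{−1}·(ij)⊗(ij) − 2c₂c₁^{−1}·i⊗i of B ⊗_F B satisfies: (i) for every unit t of the subalgebra F + F·i of B, (t j t^{−1})⊗(t j t^{−1}) − c₁^{−1}·(t(ij)t^{−1})⊗(t(ij)t^{−1}) − 2c₂c₁^{−1}·(t i t^{−1})⊗(t i t^{−1}) = v₄; and (ii) Tr(j·conj(j)) − c₁^{−1}·Tr((ij)·conj(ij)) − 2c₂c₁^{−1}·Tr(i·conj(i)) = 0, so that v₄ is a symmetric tensor in B₀⊗B₀ lying in the kernel of the contraction Δ₄. -/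
open scoped TensorProduct Quaternion

noncomputable section

namespace PaperQuat

variable {F : Type*} [Field F] {c₁ c₂ : F}

/-- The reduced trace of a quaternion: the scalar `Tr(b)` with `b + b̄ = Tr(b)·1`. -/
def qTr (a : ℍ[F, c₁, c₂]) : F := (a + star a).re

/-- The basis quaternion `i`. -/
def qI (F : Type*) [Field F] (c₁ c₂ : F) : ℍ[F, c₁, c₂] := ⟨0, 1, 0, 0⟩

/-- The basis quaternion `j`. -/
def qJ (F : Type*) [Field F] (c₁ c₂ : F) : ℍ[F, c₁, c₂] := ⟨0, 0, 1, 0⟩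

/-- The basis quaternion `k = ij`. -/
def qK (F : Type*) [Field F] (c₁ c₂ : F) : ℍ[F, c₁, c₂] := ⟨0, 0, 0, 1⟩

/-- The trace-zero subspace `B₀ = {b ∈ B : b + b̄ = 0}`. -/
def B0 (F : Type*) [Field F] (c₁ c₂ : F) : Submodule F ℍ[F, c₁, c₂] where
  carrier := {a | a + star a = 0}
  add_mem' := by
    intro a b ha hb
    simp only [Set.mem_setOf_eq] at *
    rw [star_add, add_add_add_comm a b (star a) (star b), ha, hb,
      add_zero]
  zero_mem' := by simp
  smul_mem' := by
    intro r a ha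
    simp only [Set.mem_setOf_eq] at *
    rw [QuaternionAlgebra.star_smul, ← smul_add, ha, smul_zero]

/-- The index map omitting the `r`-th and `s`-th factors (`r < s`). -/
def omit2 {m : ℕ} (r s : Fin m) (h : r < s) (i : Fin (m - 2)) : Fin m :=
  ((Finset.univ \ {r, s}).orderIsoOfFin
    (by
      rw [Finset.card_sdiff_of_subset (Finset.subset_univ _), Finset.card_univ, Fintype.card_fin,
        Finset.card_insert_of_notMem (by simp [h.ne]), Finset.card_singleton]) i : Fin m)

/-- The submodule `Sym^m(B₀) ⊆ B₀^{⊗m}` of tensors invariant under all permutations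
of the factors. -/
def symPow (F : Type*) [Field F] (c₁ c₂ : F) (m : ℕ) :
    Submodule F (⨂[F]^m ↥(B0 F c₁ c₂)) :=
  ⨅ σ : Equiv.Perm (Fin m),
    LinearMap.ker
      ((PiTensorProduct.reindex F (fun _ : Fin m => ↥(B0 F c₁ c₂)) σ).toLinearMap - LinearMap.id)

/-- The matrix `M = [[XY, Y²], [−X², −XY]]` with entries in `L[X,Y]`. -/
def Mmat (L : Type*) [CommRing L] :
    Matrix (Fin 2) (Fin 2) (MvPolynomial (Fin 2) L) :=
  !![MvPolynomial.X 0 * MvPolynomial.X 1, MvPolynomial.X 1 * MvPolynomial.X 1;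
     -(MvPolynomial.X 0 * MvPolynomial.X 0), -(MvPolynomial.X 0 * MvPolynomial.X 1)]

/-- The `GL₂`-action `(g·P)(X,Y) = det(g)^{−k/2}·P(aX+cY, bX+dY)` on polynomials, with
`m = k/2`. -/
def glAct (L : Type*) [Field L] (m : ℕ) (g : Matrix (Fin 2) (Fin 2) L)
    (P : MvPolynomial (Fin 2) L) : MvPolynomial (Fin 2) L :=
  (g.det⁻¹) ^ m •
    (MvPolynomial.aeval fun i : Fin 2 =>
      ∑ j : Fin 2, MvPolynomial.C (g j i) * MvPolynomial.X j) P

end PaperQuat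

open PaperQuat


namespace PaperQuat

theorem texp {F : Type*} [Field F] {c₁ c₂ : F} (p q : F) (hpq : p^2 - c₁*q^2 = 1) (hc₁ : c₁ ≠ 0)
    (J K I : ℍ[F,c₁,c₂]) :
    ((p • J + q • K) ⊗ₜ[F] (p • J + q • K)
      - c₁⁻¹ • (((c₁*q) • J + p • K) ⊗ₜ[F] ((c₁*q) • J + p • K))
      - (2*c₂*c₁⁻¹) • (I ⊗ₜ[F] I) : ℍ[F,c₁,c₂] ⊗[F] ℍ[F,c₁,c₂])
    = J ⊗ₜ[F] J - c₁⁻¹ • (K ⊗ₜ[F] K) - (2*c₂*c₁⁻¹) • (I ⊗ₜ[F] I) := by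
  simp only [TensorProduct.tmul_add, TensorProduct.add_tmul, ← TensorProduct.smul_tmul',
    TensorProduct.tmul_smul, smul_smul]
  match_scalars
  all_goals field_simp
  · linear_combination hpq
  · ring
  · ring
  · linear_combination -hpq

theorem unit_ne {F : Type*} [Field F] {c₁ c₂ : F} (u : ℍ[F,c₁,c₂]ˣ) (a b : F)
    (hu : (↑u : ℍ[F,c₁,c₂]) = ⟨a,b,0,0⟩) : a^2 - c₁*b^2 ≠ 0 := by
  intro hN
  have h1 : (↑u : ℍ[F,c₁,c₂]) * ⟨a,-b,0,0⟩ = 0 := by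
    rw [hu]; ext <;> simp <;> first | ring1 | linear_combination hN
  have h2 : (⟨a,-b,0,0⟩ : ℍ[F,c₁,c₂]) = 0 := by
    have := congrArg (fun x => (↑u⁻¹ : ℍ[F,c₁,c₂]) * x) h1
    simpa [← mul_assoc, u.inv_mul] using this
  have ha : a = 0 := congrArg QuaternionAlgebra.re h2
  have hb : -b = 0 := congrArg QuaternionAlgebra.imI h2
  have hz : (↑u : ℍ[F,c₁,c₂]) = 0 := by rw [hu, ha, neg_eq_zero.mp hb]; ext <;> simp
  exact one_ne_zero (α := ℍ[F,c₁,c₂]) (by rw [← u.mul_inv, hz, zero_mul])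

theorem unit_inv {F : Type*} [Field F] {c₁ c₂ : F} (u : ℍ[F,c₁,c₂]ˣ) (a b : F)
    (hu : (↑u : ℍ[F,c₁,c₂]) = ⟨a,b,0,0⟩) (hN : a^2 - c₁*b^2 ≠ 0) :
    (↑u⁻¹ : ℍ[F,c₁,c₂]) = (a^2-c₁*b^2)⁻¹ • ⟨a,-b,0,0⟩ := by
  apply u.inv_eq_of_mul_eq_one_right
  rw [hu]
  ext <;> simp <;> field_simp <;> ring

end PaperQuat

/-- The explicit `E^×`-invariant harmonic tensor
`v₄ = j⊗j − c₁⁻¹·(ij)⊗(ij) − 2c₂c₁⁻¹·i⊗i` of the proof of Lemma 2.5: it is invariant under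
the diagonal conjugation action of every unit of `F + F·i`, its contraction vanishes, it is a
symmetric tensor, and its factors lie in `B₀`. -/
theorem v4_invariant_harmonic
    (F : Type*) [Field F] [NumberField F] (c₁ c₂ : F) (hc₁ : c₁ ≠ 0) (hc₂ : c₂ ≠ 0) :
    -- (i) invariance under conjugation by units of `F + F·i`
    (∀ u : ℍ[F, c₁, c₂]ˣ,
      (∃ a b : F, (u : ℍ[F, c₁, c₂]) = algebraMap F ℍ[F, c₁, c₂] a + b • qI F c₁ c₂) →
      ((↑u * qJ F c₁ c₂ * ↑u⁻¹) ⊗ₜ[F] (↑u * qJ F c₁ c₂ * ↑u⁻¹)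
          - c₁⁻¹ • ((↑u * qK F c₁ c₂ * ↑u⁻¹) ⊗ₜ[F] (↑u * qK F c₁ c₂ * ↑u⁻¹))
          - (2 * c₂ * c₁⁻¹) • ((↑u * qI F c₁ c₂ * ↑u⁻¹) ⊗ₜ[F] (↑u * qI F c₁ c₂ * ↑u⁻¹)) :
            ℍ[F, c₁, c₂] ⊗[F] ℍ[F, c₁, c₂]) =
        qJ F c₁ c₂ ⊗ₜ[F] qJ F c₁ c₂
          - c₁⁻¹ • (qK F c₁ c₂ ⊗ₜ[F] qK F c₁ c₂)
          - (2 * c₂ * c₁⁻¹) • (qI F c₁ c₂ ⊗ₜ[F] qI F c₁ c₂)) ∧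
    -- (ii) the trace contraction vanishes
    (qTr (qJ F c₁ c₂ * star (qJ F c₁ c₂))
        - c₁⁻¹ * qTr (qK F c₁ c₂ * star (qK F c₁ c₂))
        - 2 * c₂ * c₁⁻¹ * qTr (qI F c₁ c₂ * star (qI F c₁ c₂)) = 0) ∧
    -- the factors of v₄ are trace-zero quaternions
    (qI F c₁ c₂ ∈ B0 F c₁ c₂ ∧ qJ F c₁ c₂ ∈ B0 F c₁ c₂ ∧ qK F c₁ c₂ ∈ B0 F c₁ c₂) ∧
    -- v₄ is a symmetric tensor
    ((TensorProduct.comm F ℍ[F, c₁, c₂] ℍ[F, c₁, c₂])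
        (qJ F c₁ c₂ ⊗ₜ[F] qJ F c₁ c₂
          - c₁⁻¹ • (qK F c₁ c₂ ⊗ₜ[F] qK F c₁ c₂)
          - (2 * c₂ * c₁⁻¹) • (qI F c₁ c₂ ⊗ₜ[F] qI F c₁ c₂)) =
      qJ F c₁ c₂ ⊗ₜ[F] qJ F c₁ c₂
        - c₁⁻¹ • (qK F c₁ c₂ ⊗ₜ[F] qK F c₁ c₂)
        - (2 * c₂ * c₁⁻¹) • (qI F c₁ c₂ ⊗ₜ[F] qI F c₁ c₂)) ∧
    -- v₄ lies in the kernel of the contraction Δ₄, `b₁⊗b₂ ↦ Tr(b₁·conj(b₂))`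
    (∀ D : ℍ[F, c₁, c₂] ⊗[F] ℍ[F, c₁, c₂] →ₗ[F] F,
      (∀ a b : ℍ[F, c₁, c₂], D (a ⊗ₜ[F] b) = qTr (a * star b)) →
      D (qJ F c₁ c₂ ⊗ₜ[F] qJ F c₁ c₂
          - c₁⁻¹ • (qK F c₁ c₂ ⊗ₜ[F] qK F c₁ c₂)
          - (2 * c₂ * c₁⁻¹) • (qI F c₁ c₂ ⊗ₜ[F] qI F c₁ c₂)) = 0) := by
  refine ⟨?_, ?_, ?_, ?_, ?_⟩
  · rintro u ⟨a, b, hab⟩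
    have hu : (↑u : ℍ[F,c₁,c₂]) = ⟨a,b,0,0⟩ := by
      rw [hab]; ext <;> simp [qI]
    have hN : a^2 - c₁*b^2 ≠ 0 := unit_ne u a b hu
    have hinv := unit_inv u a b hu hN
    set p : F := (a^2-c₁*b^2)⁻¹*(a^2+c₁*b^2) with hp
    set q : F := (a^2-c₁*b^2)⁻¹*(2*a*b) with hq
    have hJ : (↑u : ℍ[F,c₁,c₂]) * qJ F c₁ c₂ * ↑u⁻¹ = p • qJ F c₁ c₂ + q • qK F c₁ c₂ := by
      rw [hu, hinv, hp, hq]; ext <;> simp [qJ, qK] <;> ring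
    have hK : (↑u : ℍ[F,c₁,c₂]) * qK F c₁ c₂ * ↑u⁻¹ = (c₁*q) • qJ F c₁ c₂ + p • qK F c₁ c₂ := by
      rw [hu, hinv, hq]; ext <;> simp [qJ, qK] <;> ring
    have hI : (↑u : ℍ[F,c₁,c₂]) * qI F c₁ c₂ * ↑u⁻¹ = qI F c₁ c₂ := by
      rw [hu, hinv]; ext <;> simp [qI] <;> field_simp <;> ring
    have hpq : p^2 - c₁*q^2 = 1 := by
      rw [hp, hq]; field_simp; ring
    rw [hJ, hK, hI]
    exact texp p q hpq hc₁ _ _ _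
  · simp [qTr, qJ, qK, qI]
    field_simp
    ring
  · refine ⟨?_, ?_, ?_⟩ <;>
      · show _ + star _ = 0
        ext <;> simp [qI, qJ, qK]
  · simp only [map_sub, map_smul, TensorProduct.comm_tmul]
  · intro D hD
    rw [map_sub, map_sub, map_smul, map_smul, hD, hD, hD, smul_eq_mul, smul_eq_mul]
    simp [qTr, qJ, qK, qI]
    field_simp
    ring
end
end

section
/- Let p be a prime, ψ : ℚ_p → ℂ^× a continuous homomorphism from the additive group of ℚ_p that is trivial on ℤ_p but nontrivial on p^{−1}ℤ_p, and ρ : ℚ_p^× → ℂ^× a continuous homomorphism whose restriction to ℤ_p^× has conductor p^m with m ≥ 1. Let μ^× be a Haar measure on the locally compact group ℚ_p^×, and let φ : ℚ_p^× → ℂ be a function vanishing outside ℤ_p ∖ {0}, invariant under multiplication by units (φ(uy) = φ(y) for all u ∈ ℤ_p^×), and such that t ↦ ρ(t)·ψ(p^{−m}t)·φ(t) is μ^×-integrable. Then ∫_{ℚ_p^×} ρ(t)·ψ(p^{−m}t)·φ(t) dμ^×(t) = φ(1) · ∫_{ℤ_p^×} ρ(t)·ψ(p^{−m}t) dμ^×(t).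 -/
open MeasureTheory

/-- Reduction of a ramified-twist local zeta integral to its unit-shell term: if `ρ` has ramified
restriction to `ℤ_p^×` of conductor `p^m`, and `φ` is supported on `ℤ_p ∖ {0}` and invariant
under multiplication by units, then
`∫_{ℚ_p^×} ρ(t) ψ(p^{-m} t) φ(t) dμ^× = φ(1) ∫_{ℤ_p^×} ρ(t) ψ(p^{-m} t) dμ^×`. -/
theorem zeta_integral_ramified_twist (p : ℕ) [Fact p.Prime]
    [MeasurableSpace ℚ_[p]ˣ] [BorelSpace ℚ_[p]ˣ]
    (μ : Measure ℚ_[p]ˣ) [μ.IsHaarMeasure]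
    -- ψ : an additive character of ℚ_p, trivial on ℤ_p, nontrivial on p⁻¹ℤ_p
    (ψ : ℚ_[p] → ℂ) (hψ_cont : Continuous ψ)
    (hψ_add : ∀ x y : ℚ_[p], ψ (x + y) = ψ x * ψ y)
    (hψ_triv : ∀ x : ℤ_[p], ψ (x : ℚ_[p]) = 1)
    (hψ_nontriv : ∃ x : ℚ_[p], ‖x‖ ≤ (p : ℝ) ∧ ψ x ≠ 1)
    -- ρ : a character of ℚ_p^× whose restriction to ℤ_p^× has conductor p^m, m ≥ 1
    (ρ : ℚ_[p]ˣ → ℂ) (hρ_cont : Continuous ρ)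
    (hρ_mul : ∀ x y : ℚ_[p]ˣ, ρ (x * y) = ρ x * ρ y)
    (hρ_ne : ∀ x : ℚ_[p]ˣ, ρ x ≠ 0)
    (m : ℕ) (hm : 1 ≤ m)
    (hρ_triv : ∀ u : ℚ_[p]ˣ, ‖(u : ℚ_[p]) - 1‖ ≤ (p : ℝ) ^ (-(m : ℤ)) → ρ u = 1)
    (hρ_nontriv : ∃ u : ℚ_[p]ˣ, ‖(u : ℚ_[p])‖ = 1 ∧ ρ u ≠ 1)
    (hρ_min : 2 ≤ m → ∃ u : ℚ_[p]ˣ,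
      ‖(u : ℚ_[p]) - 1‖ ≤ (p : ℝ) ^ (-((m : ℤ) - 1)) ∧ ρ u ≠ 1)
    -- φ : supported on ℤ_p ∖ {0}, invariant under multiplication by units
    (φ : ℚ_[p]ˣ → ℂ)
    (hφ_supp : ∀ t : ℚ_[p]ˣ, ¬ ‖(t : ℚ_[p])‖ ≤ 1 → φ t = 0)
    (hφ_inv : ∀ u t : ℚ_[p]ˣ, ‖(u : ℚ_[p])‖ = 1 → φ (u * t) = φ t)
    (hint : Integrable
      (fun t : ℚ_[p]ˣ => ρ t * ψ ((p : ℚ_[p]) ^ (-(m : ℤ)) * (t : ℚ_[p])) * φ t) μ) :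
    ∫ t : ℚ_[p]ˣ, ρ t * ψ ((p : ℚ_[p]) ^ (-(m : ℤ)) * (t : ℚ_[p])) * φ t ∂μ =
      φ 1 * ∫ t in {t : ℚ_[p]ˣ | ‖(t : ℚ_[p])‖ = 1},
        ρ t * ψ ((p : ℚ_[p]) ^ (-(m : ℤ)) * (t : ℚ_[p])) ∂μ := by
  have hp1 : (1 : ℝ) < (p : ℝ) := by exact_mod_cast (Fact.out : p.Prime).one_lt
  have hp0 : (0 : ℝ) < (p : ℝ) := lt_trans one_pos hp1
  set f : ℚ_[p]ˣ → ℂ := fun t => ρ t * ψ ((p : ℚ_[p]) ^ (-(m : ℤ)) * (t : ℚ_[p])) * φ t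
    with hf
  -- ψ is trivial on elements of norm ≤ 1
  have hψ_int : ∀ x : ℚ_[p], ‖x‖ ≤ 1 → ψ x = 1 := fun x hx => hψ_triv ⟨x, hx⟩
  -- measurability of the norm map and the relevant sets
  have hcont : Continuous (fun t : ℚ_[p]ˣ => ‖(t : ℚ_[p])‖) :=
    continuous_norm.comp Units.continuous_val
  set S : Set ℚ_[p]ˣ := {t : ℚ_[p]ˣ | ‖(t : ℚ_[p])‖ = 1} with hSdef
  set B : Set ℚ_[p]ˣ := {t : ℚ_[p]ˣ | ‖(t : ℚ_[p])‖ < 1} with hBdef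
  have hS : MeasurableSet S := hcont.measurable (measurableSet_singleton 1)
  have hB : MeasurableSet B := hcont.measurable measurableSet_Iio
  -- choose a unit v close to 1 with ρ v ≠ 1
  obtain ⟨v, hv_near, hv_norm, hv_ne⟩ :
      ∃ v : ℚ_[p]ˣ, ‖(v : ℚ_[p]) - 1‖ ≤ (p : ℝ) ^ (-((m : ℤ) - 1)) ∧
        ‖(v : ℚ_[p])‖ = 1 ∧ ρ v ≠ 1 := by
    rcases eq_or_lt_of_le hm with h1 | h2
    · obtain ⟨u, hu, huρ⟩ := hρ_nontriv
      refine ⟨u, ?_, hu, huρ⟩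
      have : -((m : ℤ) - 1) = 0 := by omega
      rw [this, zpow_zero]
      calc ‖(u : ℚ_[p]) - 1‖ ≤ max ‖(u : ℚ_[p])‖ ‖(-1 : ℚ_[p])‖ := by
            rw [sub_eq_add_neg]; exact Padic.nonarchimedean _ _
        _ ≤ 1 := by simp [hu]
    · obtain ⟨u, hu, huρ⟩ := hρ_min h2
      have hlt : (p : ℝ) ^ (-((m : ℤ) - 1)) < 1 := by
        apply zpow_lt_one_of_neg₀ hp1; omega
      have hu1 : ‖(u : ℚ_[p])‖ = 1 := by
        have : ‖((u : ℚ_[p]) - 1) + 1‖ = max ‖(u : ℚ_[p]) - 1‖ ‖(1 : ℚ_[p])‖ := by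
          apply Padic.add_eq_max_of_ne
          rw [norm_one]
          exact ne_of_lt (lt_of_le_of_lt hu hlt)
        rw [sub_add_cancel] at this
        rw [this, norm_one, max_eq_right (le_of_lt (lt_of_le_of_lt hu hlt))]
      exact ⟨u, hu, hu1, huρ⟩
  -- key translation identity on B
  have hkey : ∀ t : ℚ_[p]ˣ, t ∈ B → f (v * t) = ρ v * f t := by
    intro t ht
    have ht' : ‖(t : ℚ_[p])‖ ≤ (p : ℝ) ^ (-1 : ℤ) := by
      rw [Padic.norm_le_pow_iff_norm_lt_pow_add_one]
      simpa [hBdef] using ht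
    have hsplit : (p : ℚ_[p]) ^ (-(m : ℤ)) * ((v * t : ℚ_[p]ˣ) : ℚ_[p]) =
        (p : ℚ_[p]) ^ (-(m : ℤ)) * (t : ℚ_[p]) +
        (p : ℚ_[p]) ^ (-(m : ℤ)) * (t : ℚ_[p]) * ((v : ℚ_[p]) - 1) := by
      rw [Units.val_mul]; ring
    have hnorm : ‖(p : ℚ_[p]) ^ (-(m : ℤ)) * (t : ℚ_[p]) * ((v : ℚ_[p]) - 1)‖ ≤ 1 := by
      rw [norm_mul, norm_mul, Padic.norm_p_zpow, neg_neg]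
      calc (p : ℝ) ^ (m : ℤ) * ‖(t : ℚ_[p])‖ * ‖(v : ℚ_[p]) - 1‖
          ≤ (p : ℝ) ^ (m : ℤ) * (p : ℝ) ^ (-1 : ℤ) * (p : ℝ) ^ (-((m : ℤ) - 1)) := by
            apply mul_le_mul
            · exact mul_le_mul_of_nonneg_left ht' (le_of_lt (zpow_pos hp0 _))
            · exact hv_near
            · exact norm_nonneg _
            · positivity
        _ = 1 := by
            rw [← zpow_add₀ (ne_of_gt hp0), ← zpow_add₀ (ne_of_gt hp0)]
            have h0 : (m : ℤ) + -1 + -((m : ℤ) - 1) = 0 := by ring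
            rw [h0, zpow_zero]
    have hψeq : ψ ((p : ℚ_[p]) ^ (-(m : ℤ)) * ((v * t : ℚ_[p]ˣ) : ℚ_[p])) =
        ψ ((p : ℚ_[p]) ^ (-(m : ℤ)) * (t : ℚ_[p])) := by
      rw [hsplit, hψ_add, hψ_int _ hnorm, mul_one]
    simp only [hf]
    rw [hρ_mul, hφ_inv v t hv_norm, hψeq]
    ring
  -- the indicator of B transforms by ρ v under translation
  have hind : ∀ x : ℚ_[p]ˣ, B.indicator f (v * x) = ρ v * B.indicator f x := by
    intro x
    have hmem : v * x ∈ B ↔ x ∈ B := by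
      simp only [hBdef, Set.mem_setOf_eq, Units.val_mul, norm_mul, hv_norm, one_mul]
    by_cases hx : x ∈ B
    · rw [Set.indicator_of_mem (hmem.mpr hx), Set.indicator_of_mem hx, hkey x hx]
    · rw [Set.indicator_of_notMem (fun h => hx (hmem.mp h)), Set.indicator_of_notMem hx,
        mul_zero]
  -- hence the integral over B vanishes
  have hJ : ∫ t in B, f t ∂μ = 0 := by
    have h1 : ∫ x, B.indicator f (v * x) ∂μ = ∫ x, B.indicator f x ∂μ :=
      integral_mul_left_eq_self (B.indicator f) v
    have h2 : ∫ x, B.indicator f (v * x) ∂μ = ρ v * ∫ x, B.indicator f x ∂μ := by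
      simp_rw [hind]
      exact integral_const_mul (ρ v) _
    have h3 : (ρ v - 1) * ∫ x, B.indicator f x ∂μ = 0 := by
      rw [sub_mul, one_mul, ← h2, h1, sub_self]
    have h4 : ∫ x, B.indicator f x ∂μ = 0 :=
      (mul_eq_zero.mp h3).resolve_left (sub_ne_zero.mpr hv_ne)
    rw [← integral_indicator hB]
    exact h4
  -- the integral over Sᶜ equals the integral over B
  have hBS : B ⊆ Sᶜ := by
    intro t ht
    simp only [hSdef, Set.mem_compl_iff, Set.mem_setOf_eq]
    exact ne_of_lt ht
  have hSc : ∫ t in Sᶜ, f t ∂μ = 0 := by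
    have : ∫ t in Sᶜ, f t ∂μ = ∫ t in Sᶜ, B.indicator f t ∂μ := by
      apply setIntegral_congr_fun hS.compl
      intro t ht
      by_cases htB : t ∈ B
      · rw [Set.indicator_of_mem htB]
      · rw [Set.indicator_of_notMem htB]
        have h1 : ‖(t : ℚ_[p])‖ ≠ 1 := ht
        have h2 : ¬ ‖(t : ℚ_[p])‖ < 1 := htB
        have : ¬ ‖(t : ℚ_[p])‖ ≤ 1 := fun h => h1 (le_antisymm h (not_lt.mp h2))
        simp only [hf, hφ_supp t this, mul_zero]
    rw [this, setIntegral_indicator hB, Set.inter_eq_right.mpr hBS, hJ]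
  -- on S, φ is constant equal to φ 1
  have hSint : ∫ t in S, f t ∂μ =
      φ 1 * ∫ t in S, ρ t * ψ ((p : ℚ_[p]) ^ (-(m : ℤ)) * (t : ℚ_[p])) ∂μ := by
    rw [← integral_const_mul]
    apply setIntegral_congr_fun hS
    intro t ht
    have : φ t = φ 1 := by
      have := hφ_inv t 1 ht
      rwa [mul_one] at this
    simp only [hf, this]
    ring
  -- assemble
  have htotal : ∫ t, f t ∂μ = (∫ t in S, f t ∂μ) + ∫ t in Sᶜ, f t ∂μ :=
    (integral_add_compl hS hint).symm
  calc ∫ t, f t ∂μ = (∫ t in S, f t ∂μ) + ∫ t in Sᶜ, f t ∂μ := htotal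
    _ = ∫ t in S, f t ∂μ := by rw [hSc, add_zero]
    _ = φ 1 * ∫ t in S, ρ t * ψ ((p : ℚ_[p]) ^ (-(m : ℤ)) * (t : ℚ_[p])) ∂μ := hSint
end

section
/- Let p be a prime, ρ : ℚ_p^× → ℂ^× a continuous homomorphism trivial on ℤ_p^×, and ξ ∈ ℂ^× such that both |ρ(p)·ξ·p^{−1/2}| < 1 and |ρ(p)·ξ^{−1}·p^{−1/2}| < 1. Define φ⁰ : ℚ_p^× → ℂ by φ⁰(y) := p^{−n/2} · Σ_{k=0}^{n} ξ^{2k−n} if y ∈ ℤ_p ∖ {0} with p-adic valuation v_p(y) = n, and φ⁰(y) := 0 if y ∉ ℤ_p. Let μ^× be a Haar measure on the locally compact group ℚ_p^×. Then t ↦ ρ(t)·φ⁰(t) is μ^×-integrable and (1/μ^×(ℤ_p^×)) · ∫_{ℚ_p^×} ρ(t)·φ⁰(t) dμ^×(t) = (1 − ρ(p)·ξ·p^{−1/2})^{−1} · (1 − ρ(p)·ξ^{−1}·p^{−1/2})^{−1}. -/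
open MeasureTheory
open scoped ENNReal NNReal

/-- The unramified local zeta integral of the spherical Whittaker (Kirillov) function `φ⁰` of an
unramified principal series `π(ξ, ξ⁻¹)` against an unramified character `ρ` converges and equals
the local `L`-factor `(1 − ρ(p)ξp^{−1/2})⁻¹ (1 − ρ(p)ξ⁻¹p^{−1/2})⁻¹`. -/
theorem zeta_integral_spherical (p : ℕ) [Fact p.Prime]
    [MeasurableSpace ℚ_[p]ˣ] [BorelSpace ℚ_[p]ˣ]
    (μ : Measure ℚ_[p]ˣ) [μ.IsHaarMeasure]
    (hp : (p : ℚ_[p]) ≠ 0)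
    -- ρ : an unramified character of ℚ_p^×
    (ρ : ℚ_[p]ˣ → ℂ) (hρ_cont : Continuous ρ)
    (hρ_mul : ∀ x y : ℚ_[p]ˣ, ρ (x * y) = ρ x * ρ y)
    (hρ_ne : ∀ x : ℚ_[p]ˣ, ρ x ≠ 0)
    (hρ_unram : ∀ u : ℚ_[p]ˣ, ‖(u : ℚ_[p])‖ = 1 → ρ u = 1)
    -- ξ : Satake parameter, with convergence conditions
    (ξ : ℂ) (hξ : ξ ≠ 0)
    (hconv₁ : ‖ρ (Units.mk0 (p : ℚ_[p]) hp) * ξ * ((Real.sqrt p : ℂ))⁻¹‖ < 1)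
    (hconv₂ : ‖ρ (Units.mk0 (p : ℚ_[p]) hp) * ξ⁻¹ * ((Real.sqrt p : ℂ))⁻¹‖ < 1)
    -- φ⁰ : the spherical Kirillov function
    (φ₀ : ℚ_[p]ˣ → ℂ)
    (hφ₀_supp : ∀ y : ℚ_[p]ˣ, ¬ ‖(y : ℚ_[p])‖ ≤ 1 → φ₀ y = 0)
    (hφ₀_val : ∀ (y : ℚ_[p]ˣ) (n : ℕ), ‖(y : ℚ_[p])‖ = (p : ℝ) ^ (-(n : ℤ)) →
      φ₀ y = ((Real.sqrt p : ℂ))⁻¹ ^ n * ∑ k ∈ Finset.range (n + 1), ξ ^ (2 * (k : ℤ) - n)) :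
    Integrable (fun t : ℚ_[p]ˣ => ρ t * φ₀ t) μ ∧
    ((μ {t : ℚ_[p]ˣ | ‖(t : ℚ_[p])‖ = 1}).toReal : ℂ)⁻¹ *
        ∫ t : ℚ_[p]ˣ, ρ t * φ₀ t ∂μ =
      (1 - ρ (Units.mk0 (p : ℚ_[p]) hp) * ξ * ((Real.sqrt p : ℂ))⁻¹)⁻¹ *
        (1 - ρ (Units.mk0 (p : ℚ_[p]) hp) * ξ⁻¹ * ((Real.sqrt p : ℂ))⁻¹)⁻¹ := by
    classical
  have hp1 : (1 : ℝ) < (p : ℝ) := by exact_mod_cast (Fact.out : p.Prime).one_lt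
  have hp0 : (0 : ℝ) < (p : ℝ) := by linarith
  have hpne1 : (p : ℝ) ≠ 1 := ne_of_gt hp1
  set P : ℚ_[p]ˣ := Units.mk0 (p : ℚ_[p]) hp with hPdef
  set s : ℂ := ((Real.sqrt p : ℂ))⁻¹ with hsdef
  set x : ℂ := ρ P * ξ * s with hxdef
  set y : ℂ := ρ P * ξ⁻¹ * s with hydef
  have hxnorm : ‖x‖ < 1 := by exact hconv₁
  have hynorm : ‖y‖ < 1 := by exact hconv₂
  -- the sets and coefficients
  set S : ℕ → Set ℚ_[p]ˣ := fun n => {t : ℚ_[p]ˣ | ‖(t : ℚ_[p])‖ = (p : ℝ) ^ (-(n : ℤ))}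
    with hSdef
  set a : ℕ → ℂ := fun n => ∑ k ∈ Finset.range (n + 1), x ^ k * y ^ (n - k) with hadef
  set g : ℕ → ℚ_[p]ˣ → ℂ := fun n => (S n).indicator (fun _ => a n) with hgdef
  -- basic facts about norms
  have hnormPn : ∀ n : ℕ, ‖((P ^ n : ℚ_[p]ˣ) : ℚ_[p])‖ = (p : ℝ) ^ (-(n : ℤ)) := by
    intro n
    rw [Units.val_pow_eq_pow_val, norm_pow, hPdef, Units.val_mk0, Padic.norm_p, zpow_neg,
      zpow_natCast, inv_pow]
  have hmemS : ∀ (t : ℚ_[p]ˣ) (n : ℕ), t ∈ S n ↔ ‖(t : ℚ_[p])‖ = (p : ℝ) ^ (-(n : ℤ)) := by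
    intro t n; rfl
  have hSdisj : ∀ (t : ℚ_[p]ˣ) (m n : ℕ), t ∈ S m → t ∈ S n → m = n := by
    intro t m n hm hn
    rw [hmemS] at hm hn
    have := zpow_right_injective₀ hp0 hpne1 (hm.symm.trans hn)
    omega
  have hexS : ∀ t : ℚ_[p]ˣ, ‖(t : ℚ_[p])‖ ≤ 1 → ∃ n : ℕ, t ∈ S n := by
    intro t h
    have ht0 : (t : ℚ_[p]) ≠ 0 := t.ne_zero
    have hv := Padic.norm_eq_zpow_neg_valuation ht0
    have hnon : 0 ≤ (t : ℚ_[p]).valuation := (Padic.norm_le_one_iff_val_nonneg _).1 h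
    exact ⟨(t : ℚ_[p]).valuation.toNat, by
      rw [hmemS, hv, Int.toNat_of_nonneg hnon]⟩
  have hnotS : ∀ t : ℚ_[p]ˣ, ¬ ‖(t : ℚ_[p])‖ ≤ 1 → ∀ n, t ∉ S n := by
    intro t h n hn
    rw [hmemS] at hn
    apply h
    rw [hn]
    calc (p : ℝ) ^ (-(n : ℤ)) ≤ (p : ℝ) ^ (0 : ℤ) :=
          zpow_le_zpow_right₀ hp1.le (by omega)
      _ = 1 := zpow_zero _
  -- character values
  have hρ1 : ρ 1 = 1 := by
    have h := hρ_mul 1 1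
    rw [one_mul] at h
    exact (mul_left_cancel₀ (hρ_ne 1) (by rw [mul_one, ← h])).symm
  have hρpow : ∀ n : ℕ, ρ (P ^ n) = (ρ P) ^ n := by
    intro n
    induction n with
    | zero => simpa using hρ1
    | succ n ih => rw [pow_succ, hρ_mul, ih, pow_succ]
  have hρS : ∀ (t : ℚ_[p]ˣ) (n : ℕ), t ∈ S n → ρ t = (ρ P) ^ n := by
    intro t n ht
    rw [hmemS] at ht
    set u : ℚ_[p]ˣ := (P ^ n)⁻¹ * t with hu
    have htu : t = P ^ n * u := by rw [hu, ← mul_assoc, mul_inv_cancel, one_mul]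
    have hnu : ‖(u : ℚ_[p])‖ = 1 := by
      have : ((u : ℚ_[p])) = ((P ^ n : ℚ_[p]ˣ) : ℚ_[p])⁻¹ * (t : ℚ_[p]) := by
        rw [hu, Units.val_mul, Units.val_inv_eq_inv_val]
      rw [this, norm_mul, norm_inv, hnormPn n, ht]
      have : ((p : ℝ) ^ (-(n : ℤ))) ≠ 0 := by positivity
      field_simp
    rw [htu, hρ_mul, hρpow, hρ_unram u hnu, mul_one]
  -- the pointwise identity
  have hterm : ∀ (n k : ℕ), k ∈ Finset.range (n + 1) →
      x ^ k * y ^ (n - k) = (ρ P) ^ n * s ^ n * ξ ^ (2 * (k : ℤ) - n) := by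
    intro n k hk
    rw [Finset.mem_range] at hk
    have hkn : k ≤ n := by omega
    have hξz : ξ ^ (k : ℤ) * (ξ ^ ((n - k : ℕ) : ℤ))⁻¹ = ξ ^ (2 * (k : ℤ) - n) := by
      rw [← zpow_neg, ← zpow_add₀ hξ]
      congr 1
      have : ((n - k : ℕ) : ℤ) = (n : ℤ) - k := by omega
      omega
    calc x ^ k * y ^ (n - k)
        = ((ρ P) ^ k * (ρ P) ^ (n - k)) * (s ^ k * s ^ (n - k)) *
            (ξ ^ k * (ξ⁻¹) ^ (n - k)) := by rw [hxdef, hydef]; ring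
      _ = (ρ P) ^ n * s ^ n * ξ ^ (2 * (k : ℤ) - n) := by
          rw [← pow_add, ← pow_add, Nat.add_sub_cancel' hkn, inv_pow ξ (n - k), ← zpow_natCast ξ k,
            ← zpow_natCast ξ (n - k), hξz]
  have hvalS : ∀ (t : ℚ_[p]ˣ) (n : ℕ), t ∈ S n → ρ t * φ₀ t = a n := by
    intro t n ht
    have ht' := (hmemS t n).1 ht
    rw [hρS t n ht, hφ₀_val t n ht']
    have han : a n = ∑ k ∈ Finset.range (n + 1), x ^ k * y ^ (n - k) := rfl
    rw [han, Finset.sum_congr rfl (hterm n), ← Finset.mul_sum]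
    ring
  have hsupp : ∀ t : ℚ_[p]ˣ, ∃ F : Finset ℕ, ∀ m ∉ F, g m t = 0 := by
    intro t
    by_cases h : ‖(t : ℚ_[p])‖ ≤ 1
    · obtain ⟨n, hn⟩ := hexS t h
      exact ⟨{n}, fun m hm => Set.indicator_of_notMem
        (fun hmem => hm (Finset.mem_singleton.2 (hSdisj t m n hmem hn))) _⟩
    · exact ⟨∅, fun m _ => Set.indicator_of_notMem (hnotS t h m) _⟩
  have hpt : ∀ t : ℚ_[p]ˣ, ρ t * φ₀ t = ∑' n, g n t := by
    intro t
    by_cases h : ‖(t : ℚ_[p])‖ ≤ 1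
    · obtain ⟨n, hn⟩ := hexS t h
      rw [tsum_eq_single n (fun m hm => Set.indicator_of_notMem
        (fun hmem => hm (hSdisj t m n hmem hn)) _)]
      rw [Set.indicator_of_mem hn]
      exact hvalS t n hn
    · rw [hφ₀_supp t h, mul_zero]
      rw [tsum_eq_single 0 (fun m _ => Set.indicator_of_notMem (hnotS t h m) _),
        Set.indicator_of_notMem (hnotS t h 0)]
  have hsum_pt : ∀ t, Summable fun n => g n t := by
    intro t
    obtain ⟨F, hF⟩ := hsupp t
    exact summable_of_ne_finset_zero hF
  -- measurability
  have hcoe_cont : Continuous (fun t : ℚ_[p]ˣ => (t : ℚ_[p])) := Units.continuous_val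
  have hSmeas : ∀ n, MeasurableSet (S n) := by
    intro n
    have : S n = (fun t : ℚ_[p]ˣ => ‖(t : ℚ_[p])‖) ⁻¹' {(p : ℝ) ^ (-(n : ℤ))} := rfl
    rw [this]
    exact (continuous_norm.comp hcoe_cont).measurable (measurableSet_singleton _)
  have hgmeas : ∀ n, Measurable (g n) := fun n => measurable_const.indicator (hSmeas n)
  have hFmeas : Measurable (fun t : ℚ_[p]ˣ => ρ t * φ₀ t) := by
    have : (fun t : ℚ_[p]ˣ => ρ t * φ₀ t) = fun t => ∑' n, g n t := funext hpt
    rw [this]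
    refine measurable_of_tendsto_metrizable
      (f := fun m => fun t => ∑ n ∈ Finset.range m, g n t)
      (fun m => Finset.measurable_sum _ fun n _ => hgmeas n) ?_
    rw [tendsto_pi_nhds]
    exact fun t => (hsum_pt t).hasSum.tendsto_sum_nat
  -- measures of the sets
  have hμS : ∀ n, μ (S n) = μ (S 0) := by
    intro n
    have key : ((P ^ n * ·) ⁻¹' (S n)) = S 0 := by
      ext t
      simp only [Set.mem_preimage, hmemS, Units.val_mul, norm_mul, hnormPn n]
      have h0 : ((p : ℝ) ^ (-(n : ℤ))) ≠ 0 := by positivity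
      constructor
      · intro h
        have : (p : ℝ) ^ (-(n : ℤ)) * ‖(t : ℚ_[p])‖ = (p : ℝ) ^ (-(n : ℤ)) * 1 := by
          rw [mul_one]; exact h
        have := mul_left_cancel₀ h0 this
        simpa using this
      · intro h
        simp only [Nat.cast_zero, neg_zero, zpow_zero] at h
        rw [h, mul_one]
    rw [← measure_preimage_mul μ (P ^ n) (S n), key]
  -- the set S 0 has finite positive measure
  have hS0_eq : {t : ℚ_[p]ˣ | ‖(t : ℚ_[p])‖ = 1} = S 0 := by
    ext t; simp [hmemS]
  have hS0_compact : IsCompact (S 0) := by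
    rw [Units.isEmbedding_val₀.isCompact_iff]
    have himg : (fun t : ℚ_[p]ˣ => (t : ℚ_[p])) '' (S 0) = Metric.sphere (0 : ℚ_[p]) 1 := by
      ext z
      simp only [Set.mem_image, Metric.mem_sphere, dist_zero_right]
      constructor
      · rintro ⟨t, ht, rfl⟩
        have := (hmemS t 0).1 ht
        simpa using this
      · intro hz
        have hz0 : z ≠ 0 := by intro h; rw [h] at hz; simp at hz
        exact ⟨Units.mk0 z hz0, by rw [hmemS]; simpa using hz, rfl⟩
    rw [himg]
    exact isCompact_sphere 0 1
  have hVlt : μ (S 0) < ⊤ := hS0_compact.measure_lt_top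
  have hV0 : μ (S 0) ≠ 0 := by
    have hsub : (fun t : ℚ_[p]ˣ => (t : ℚ_[p])) ⁻¹' (Metric.ball (1 : ℚ_[p]) 1) ⊆ S 0 := by
      intro t ht
      simp only [Set.mem_preimage, Metric.mem_ball, dist_eq_norm] at ht
      rw [hmemS]
      have h1 : ‖(1 : ℚ_[p])‖ = 1 := norm_one
      have hne : ‖(t : ℚ_[p]) - 1‖ ≠ ‖(1 : ℚ_[p])‖ := by rw [h1]; exact ne_of_lt ht
      have : ‖((t : ℚ_[p]) - 1) + 1‖ = max ‖(t : ℚ_[p]) - 1‖ ‖(1 : ℚ_[p])‖ :=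
        Padic.add_eq_max_of_ne hne
      rw [sub_add_cancel] at this
      rw [this, h1]
      simp only [Nat.cast_zero, neg_zero, zpow_zero]
      rw [max_eq_right (le_of_lt ht)]
    have hopen : IsOpen ((fun t : ℚ_[p]ˣ => (t : ℚ_[p])) ⁻¹' (Metric.ball (1 : ℚ_[p]) 1)) :=
      Metric.isOpen_ball.preimage hcoe_cont
    have hne : ((fun t : ℚ_[p]ˣ => (t : ℚ_[p])) ⁻¹' (Metric.ball (1 : ℚ_[p]) 1)).Nonempty :=
      ⟨1, by simp⟩
    have hpos := hopen.measure_pos μ hne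
    exact fun h => absurd (measure_mono_null hsub h) (ne_of_gt hpos)
  have hVr0 : (μ (S 0)).toReal ≠ 0 := by
    rw [ENNReal.toReal_ne_zero]
    exact ⟨hV0, hVlt.ne⟩
  -- summability of the coefficients
  have hxs : Summable fun k : ℕ => ‖x ^ k‖ := by
    simpa only [norm_pow] using summable_geometric_of_lt_one (norm_nonneg x) hxnorm
  have hys : Summable fun k : ℕ => ‖y ^ k‖ := by
    simpa only [norm_pow] using summable_geometric_of_lt_one (norm_nonneg y) hynorm
  have haS : Summable fun n => ‖a n‖ := by
    rw [hadef]
    exact summable_norm_sum_mul_range_of_summable_norm hxs hys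
  -- integrability of each g n
  have hg_int : ∀ n, Integrable (g n) μ := by
    intro n
    rw [hgdef]
    rw [integrable_indicator_iff (hSmeas n)]
    exact integrableOn_const (by rw [hμS n]; exact hVlt.ne)
  have hg_norm_int : ∀ n, ∫ t, ‖g n t‖ ∂μ = (μ (S 0)).toReal * ‖a n‖ := by
    intro n
    have : (fun t => ‖g n t‖) = (S n).indicator (fun _ => ‖a n‖) := by
      funext t; rw [hgdef]; exact norm_indicator_eq_indicator_norm _ _
    rw [this, integral_indicator_const _ (hSmeas n), measureReal_def, hμS n, smul_eq_mul]
  have hg_int' : ∀ n, ∫ t, g n t ∂μ = (μ (S 0)).toReal • a n := by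
    intro n
    rw [hgdef]
    rw [integral_indicator_const _ (hSmeas n), measureReal_def, hμS n]
  have hsum_norm : Summable fun n => ∫ t, ‖g n t‖ ∂μ := by
    have : (fun n => ∫ t, ‖g n t‖ ∂μ) = fun n => (μ (S 0)).toReal * ‖a n‖ :=
      funext hg_norm_int
    rw [this]
    exact haS.mul_left _
  -- Integrability
  have hFeq : (fun t : ℚ_[p]ˣ => ρ t * φ₀ t) = fun t => ∑' n, g n t := funext hpt
  have hint : Integrable (fun t : ℚ_[p]ˣ => ρ t * φ₀ t) μ := by
    refine ⟨hFmeas.aestronglyMeasurable, ?_⟩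
    show (∫⁻ t, (‖ρ t * φ₀ t‖₊ : ℝ≥0∞) ∂μ) < ⊤
    calc ∫⁻ t, ‖ρ t * φ₀ t‖₊ ∂μ ≤ ∫⁻ t, ∑' n, (‖g n t‖₊ : ℝ≥0∞) ∂μ := by
          refine lintegral_mono fun t => ?_
          rw [hpt t]
          have hsnn : Summable fun n => ‖g n t‖₊ := by
            obtain ⟨F, hF⟩ := hsupp t
            exact summable_of_ne_finset_zero (fun m hm => by rw [hF m hm]; simp)
          calc (‖∑' n, g n t‖₊ : ℝ≥0∞) ≤ ((∑' n, ‖g n t‖₊ : NNReal) : ℝ≥0∞) := by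
                exact_mod_cast nnnorm_tsum_le hsnn
            _ = ∑' n, (‖g n t‖₊ : ℝ≥0∞) := ENNReal.coe_tsum hsnn
      _ = ∑' n, ∫⁻ t, (‖g n t‖₊ : ℝ≥0∞) ∂μ :=
          lintegral_tsum fun n => ((hgmeas n).nnnorm.coe_nnreal_ennreal).aemeasurable
      _ = ∑' n, (‖a n‖₊ : ℝ≥0∞) * μ (S 0) := by
          congr 1
          funext n
          have : (fun t => (‖g n t‖₊ : ℝ≥0∞)) =
              (S n).indicator (fun _ => (‖a n‖₊ : ℝ≥0∞)) := by
            funext t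
            rw [hgdef]
            rw [nnnorm_indicator_eq_indicator_nnnorm]
            by_cases ht : t ∈ S n <;> simp [ht]
          rw [this, lintegral_indicator_const (hSmeas n), hμS n]
      _ = (∑' n, (‖a n‖₊ : ℝ≥0∞)) * μ (S 0) := ENNReal.tsum_mul_right
      _ < ⊤ := by
          apply ENNReal.mul_lt_top _ hVlt
          rw [lt_top_iff_ne_top, ENNReal.tsum_coe_ne_top_iff_summable]
          exact NNReal.summable_coe.1 (by simpa using haS)
  refine ⟨hint, ?_⟩
  have hI : ∫ t, ρ t * φ₀ t ∂μ = ((μ (S 0)).toReal : ℂ) * ∑' n, a n := by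
    rw [hFeq, ← integral_tsum_of_summable_integral_norm hg_int hsum_norm]
    have h1 : (fun n => ∫ t, g n t ∂μ) = fun n => ((μ (S 0)).toReal : ℂ) * a n := by
      funext n; rw [hg_int' n, Complex.real_smul]
    rw [h1, tsum_mul_left]
  rw [hS0_eq, hI, ← mul_assoc, inv_mul_cancel₀ (Complex.ofReal_ne_zero.2 hVr0), one_mul]
  calc ∑' n, a n = (∑' n, x ^ n) * ∑' n, y ^ n :=
        (tsum_mul_tsum_eq_tsum_sum_range_of_summable_norm hxs hys).symm
    _ = (1 - x)⁻¹ * (1 - y)⁻¹ := by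
        rw [tsum_geometric_of_norm_lt_one hxnorm, tsum_geometric_of_norm_lt_one hynorm]
end

section
/- Assume c₁ is not a square in F. Then κ(i) = 2i·XY in 𝒫(2)_E, and κ(v₄) = −12·c₂·X²Y² in 𝒫(4)_E, where v₄ := j⊗j − c₁^{−1}·(ij)⊗(ij) − 2c₂c₁^{−1}·i⊗i. Consequently, for every t ∈ E^×, κ(i)(1, t/t̄)·(t/t̄)^{−1} = 2i, which lies in i·F, and κ(v₄)(1, t/t̄)·(t/t̄)^{−2} = −12c₂, which lies in F. -/
open scoped TensorProduct Quaternion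

noncomputable section

namespace PaperQuat

/-- The embedding `ι : B → M₂(E)`, `ι(e₁ + e₂j) = [[e₁, c₂e₂],[ē₂, ē₁]]`, written out on the
components of a quaternion, where `E = F(√c₁)` is realized as an extension of `F` with a chosen
square root `s` of `c₁`. -/
def iotaE (F : Type*) [Field F] (c₁ c₂ : F) (E : Type*) [Field E] [Algebra F E] (s : E)
    (b : ℍ[F, c₁, c₂]) : Matrix (Fin 2) (Fin 2) E :=
  !![algebraMap F E b.re + algebraMap F E b.imI * s,
     algebraMap F E c₂ * (algebraMap F E b.imJ + algebraMap F E b.imK * s);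
     algebraMap F E b.imJ - algebraMap F E b.imK * s,
     algebraMap F E b.re - algebraMap F E b.imI * s]

/-- The factor `tr(M·ι(b))` of the map `κ` of Lemma 2.4, for the explicit embedding
`ι : B → M₂(E)`. -/
def kappaFactor (F : Type*) [Field F] (c₁ c₂ : F) (E : Type*) [Field E] [Algebra F E] (s : E)
    (b : ℍ[F, c₁, c₂]) : MvPolynomial (Fin 2) E :=
  Matrix.trace (Mmat E * ((iotaE F c₁ c₂ E s b).map MvPolynomial.C))

end PaperQuat

open PaperQuat


namespace PaperQuat

variable (F : Type*) [Field F] (c₁ c₂ : F) (E : Type*) [Field E] [Algebra F E] (s : E)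

theorem kappa_qI_eq : kappaFactor F c₁ c₂ E s (qI F c₁ c₂) =
    MvPolynomial.C (2 * s) * (MvPolynomial.X 0 * MvPolynomial.X 1) := by
  simp [kappaFactor, Mmat, iotaE, qI, Matrix.trace, Matrix.mul_apply, Fin.sum_univ_two,
    Matrix.diag, Matrix.map_apply, map_mul, map_ofNat]
  ring

theorem kappa_qJ_eq : kappaFactor F c₁ c₂ E s (qJ F c₁ c₂) =
    MvPolynomial.X 1 ^ 2 - MvPolynomial.C (algebraMap F E c₂) * MvPolynomial.X 0 ^ 2 := by
  simp [kappaFactor, Mmat, iotaE, qJ, Matrix.trace, Matrix.mul_apply, Fin.sum_univ_two,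
    Matrix.diag, Matrix.map_apply]
  ring

theorem kappa_qK_eq : kappaFactor F c₁ c₂ E s (qK F c₁ c₂) =
    -(MvPolynomial.C s) *
      (MvPolynomial.X 1 ^ 2 + MvPolynomial.C (algebraMap F E c₂) * MvPolynomial.X 0 ^ 2) := by
  simp [kappaFactor, Mmat, iotaE, qK, Matrix.trace, Matrix.mul_apply, Fin.sum_univ_two,
    Matrix.diag, Matrix.map_apply]
  ring

theorem kappa_v4_eq (hc₁ : c₁ ≠ 0) (hs : s * s = algebraMap F E c₁) :
    kappaFactor F c₁ c₂ E s (qJ F c₁ c₂) ^ 2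
        - MvPolynomial.C ((algebraMap F E c₁)⁻¹) * kappaFactor F c₁ c₂ E s (qK F c₁ c₂) ^ 2
        - MvPolynomial.C (2 * algebraMap F E c₂ * (algebraMap F E c₁)⁻¹) *
            kappaFactor F c₁ c₂ E s (qI F c₁ c₂) ^ 2 =
      MvPolynomial.C (-(12 : E) * algebraMap F E c₂) *
        (MvPolynomial.X 0 ^ 2 * MvPolynomial.X 1 ^ 2) := by
  have hc₁E : algebraMap F E c₁ ≠ 0 := (map_ne_zero _).mpr hc₁
  rw [kappa_qI_eq, kappa_qJ_eq, kappa_qK_eq]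
  have hss : (MvPolynomial.C s : MvPolynomial (Fin 2) E) * MvPolynomial.C s
      = MvPolynomial.C (algebraMap F E c₁) := by rw [← map_mul, hs]
  have hinv : (MvPolynomial.C ((algebraMap F E c₁)⁻¹) : MvPolynomial (Fin 2) E) *
      MvPolynomial.C (algebraMap F E c₁) = 1 := by
    rw [← map_mul, inv_mul_cancel₀ hc₁E, map_one]
  simp only [map_mul, map_neg, map_ofNat]
  set A := (MvPolynomial.C (algebraMap F E c₂) : MvPolynomial (Fin 2) E)
  set B := (MvPolynomial.C ((algebraMap F E c₁)⁻¹) : MvPolynomial (Fin 2) E)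
  set S := (MvPolynomial.C s : MvPolynomial (Fin 2) E)
  set u := (MvPolynomial.X 1 : MvPolynomial (Fin 2) E) ^ 2 + A * MvPolynomial.X 0 ^ 2
  set w := ((MvPolynomial.X 0 : MvPolynomial (Fin 2) E) * MvPolynomial.X 1) ^ 2
  linear_combination (-(B * u ^ 2) - 8 * A * B * w) * hss + (-(u ^ 2) - 8 * A * w) * hinv

end PaperQuat

/-- The explicit evaluations in the proof of Lemma 2.5: `κ(i) = 2i·XY`,
`κ(v₄) = −12c₂·X²Y²`, and the corresponding values of the associated functions on `E^×`,
which are the constants `2i ∈ i·F` and `−12c₂ ∈ F` respectively. -/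
theorem kappa_invariant_vectors_eval
    (F : Type*) [Field F] [NumberField F] (c₁ c₂ : F) (hc₁ : c₁ ≠ 0) (hc₂ : c₂ ≠ 0)
    (hnotsq : ∀ a : F, a * a ≠ c₁)
    (E : Type*) [Field E] [Algebra F E] (s : E) (hs : s * s = algebraMap F E c₁) :
    -- κ(i) = 2i·XY in 𝒫(2)_E
    (kappaFactor F c₁ c₂ E s (qI F c₁ c₂) =
      MvPolynomial.C (2 * s) * (MvPolynomial.X 0 * MvPolynomial.X 1)) ∧
    -- κ(v₄) = −12·c₂·X²Y² in 𝒫(4)_E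
    (kappaFactor F c₁ c₂ E s (qJ F c₁ c₂) ^ 2
        - MvPolynomial.C ((algebraMap F E c₁)⁻¹) * kappaFactor F c₁ c₂ E s (qK F c₁ c₂) ^ 2
        - MvPolynomial.C (2 * algebraMap F E c₂ * (algebraMap F E c₁)⁻¹) *
            kappaFactor F c₁ c₂ E s (qI F c₁ c₂) ^ 2 =
      MvPolynomial.C (-(12 : E) * algebraMap F E c₂) *
        (MvPolynomial.X 0 ^ 2 * MvPolynomial.X 1 ^ 2)) ∧
    -- for every t = x + y·s ∈ E^×, κ(i)(1, t/t̄)·(t/t̄)⁻¹ = 2i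
    (∀ x y : F,
      algebraMap F E x + algebraMap F E y * s ≠ 0 →
      algebraMap F E x - algebraMap F E y * s ≠ 0 →
      MvPolynomial.eval
          ![1, (algebraMap F E x + algebraMap F E y * s) /
              (algebraMap F E x - algebraMap F E y * s)]
          (kappaFactor F c₁ c₂ E s (qI F c₁ c₂)) *
        ((algebraMap F E x + algebraMap F E y * s) /
            (algebraMap F E x - algebraMap F E y * s))⁻¹ = 2 * s) ∧
    -- for every t = x + y·s ∈ E^×, κ(v₄)(1, t/t̄)·(t/t̄)⁻² = −12c₂
    (∀ x y : F,
      algebraMap F E x + algebraMap F E y * s ≠ 0 →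
      algebraMap F E x - algebraMap F E y * s ≠ 0 →
      MvPolynomial.eval
          ![1, (algebraMap F E x + algebraMap F E y * s) /
              (algebraMap F E x - algebraMap F E y * s)]
          (kappaFactor F c₁ c₂ E s (qJ F c₁ c₂) ^ 2
            - MvPolynomial.C ((algebraMap F E c₁)⁻¹) *
                kappaFactor F c₁ c₂ E s (qK F c₁ c₂) ^ 2
            - MvPolynomial.C (2 * algebraMap F E c₂ * (algebraMap F E c₁)⁻¹) *
                kappaFactor F c₁ c₂ E s (qI F c₁ c₂) ^ 2) *
        (((algebraMap F E x + algebraMap F E y * s) /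
            (algebraMap F E x - algebraMap F E y * s)) ^ 2)⁻¹ =
      -(12 : E) * algebraMap F E c₂) ∧
    -- the values lie in `i·F` and in `F` respectively
    ((∃ a : F, (2 : E) * s = s * algebraMap F E a) ∧
      (∃ b : F, -(12 : E) * algebraMap F E c₂ = algebraMap F E b)) := by
  have hv4 := kappa_v4_eq F c₁ c₂ E s hc₁ hs
  refine ⟨kappa_qI_eq F c₁ c₂ E s, hv4, ?_, ?_, ⟨2, by rw [map_ofNat]; ring⟩,
    ⟨(-12) * c₂, by simp [map_mul, map_neg, map_ofNat]⟩⟩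
  · intro x y hx hy
    have hu : (algebraMap F E x + algebraMap F E y * s) /
        (algebraMap F E x - algebraMap F E y * s) ≠ 0 := div_ne_zero hx hy
    rw [kappa_qI_eq]
    simp only [map_mul, MvPolynomial.eval_mul, MvPolynomial.eval_C, MvPolynomial.eval_X,
      Matrix.cons_val_zero, Matrix.cons_val_one, Matrix.head_cons]
    field_simp
    rw [mul_comm s (algebraMap F E y), mul_assoc, mul_div_assoc, div_self (mul_ne_zero hx hy),
      mul_one]
  · intro x y hx hy
    have hu : (algebraMap F E x + algebraMap F E y * s) /
        (algebraMap F E x - algebraMap F E y * s) ≠ 0 := div_ne_zero hx hy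
    rw [hv4]
    simp only [MvPolynomial.eval_mul, MvPolynomial.eval_pow, MvPolynomial.eval_C,
      MvPolynomial.eval_X, Matrix.cons_val_zero, Matrix.cons_val_one, Matrix.head_cons]
    field_simp
end
end
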